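/- Let K/ℚ be a Galois extension of degree k with Galois group {σ_1, ..., σ_k}, let ω_1, ..., ω_k be a ℚ-basis of K, and let A = (σ_i(ω_j)). Then for any fixed row index i, the k minors det(A^{ij}), j = 1, ..., k (obtained by deleting the i-th row and j-th column), are linearly independent over ℚ; in particular each det(A^{ij}) is nonzero. -/

import Mathlib

/-- For a Galois extension `K/ℚ` of degree `n+1`, with Galois group `{σ₁,…}` and a
`ℚ`-basis `ω` of `K`, for `A = (σᵢ(ωⱼ))` and any fixed row `i`, the minors
`det A^{ij}` (delete row `i`, column `j`) are linearly independent over `ℚ`;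
in particular each is nonzero. -/
theorem galois_matrix_minors_linear_independent
    (K : Type*) [Field K] [Algebra ℚ K] [FiniteDimensional ℚ K] [IsGalois ℚ K]
    (n : ℕ) (hk : Module.finrank ℚ K = n + 1)
    (σ : Fin (n + 1) → (K ≃ₐ[ℚ] K)) (hσ : Function.Bijective σ)
    (ω : Module.Basis (Fin (n + 1)) ℚ K) (i : Fin (n + 1)) :
    LinearIndependent ℚ (fun j : Fin (n + 1) =>
      ((Matrix.of fun i' j' => σ i' (ω j')).submatrix i.succAbove j.succAbove).det) ∧
    ∀ j : Fin (n + 1),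
      ((Matrix.of fun i' j' => σ i' (ω j')).submatrix i.succAbove j.succAbove).det ≠ 0 := by
  classical
  set A : Matrix (Fin (n + 1)) (Fin (n + 1)) K :=
    Matrix.of fun i' j' => σ i' (ω j') with hA
  set m : Fin (n + 1) → Fin (n + 1) → K :=
    fun s j => (A.submatrix s.succAbove j.succAbove).det with hm
  -- Step 1 : det A ≠ 0 via Dedekind's independence of characters
  have hdet : A.det ≠ 0 := by
    intro h
    rw [← Matrix.det_transpose] at h
    obtain ⟨v, hv0, hv⟩ := Matrix.exists_mulVec_eq_zero_iff.mpr h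
    have hrow : ∀ x : K, (∑ k, v k * σ k x) = 0 := by
      have hf : (∑ k, v k • (σ k).toLinearMap : K →ₗ[ℚ] K) = 0 := by
        apply ω.ext
        intro j
        have hj := congrFun hv j
        simp only [Matrix.mulVec, dotProduct, Matrix.transpose_apply, hA,
          Matrix.of_apply, Pi.zero_apply] at hj
        simp only [LinearMap.sum_apply, LinearMap.smul_apply, AlgEquiv.toLinearMap_apply,
          smul_eq_mul, LinearMap.zero_apply]
        rw [← hj]
        exact Finset.sum_congr rfl fun k _ => mul_comm _ _
      intro x
      have := LinearMap.congr_fun hf x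
      simpa only [LinearMap.sum_apply, LinearMap.smul_apply, AlgEquiv.toLinearMap_apply,
        smul_eq_mul, LinearMap.zero_apply] using this
    set φ : Fin (n + 1) → (K →* K) := fun k => ((σ k : K →ₐ[ℚ] K) : K →* K) with hφ
    have hφinj : Function.Injective φ := by
      intro a b hab
      apply hσ.1
      apply AlgEquiv.ext
      intro x
      exact DFunLike.congr_fun hab x
    have li : LinearIndependent K (fun k => (φ k : K → K)) :=
      (linearIndependent_monoidHom K K).comp φ hφinj
    have h0 : (∑ k, v k • (φ k : K → K)) = 0 := by
      funext x
      simp only [Finset.sum_apply, Pi.smul_apply, smul_eq_mul, Pi.zero_apply]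
      exact hrow x
    exact hv0 (funext (Fintype.linearIndependent_iff.mp li v h0))
  -- Step 2 : a vanishing rational combination of the row-`i` minors propagates to every row
  have key : ∀ c : Fin (n + 1) → ℚ, (∑ j, algebraMap ℚ K (c j) * m i j) = 0 →
      ∀ s, (∑ j, algebraMap ℚ K (c j) * m s j) = 0 := by
    intro c hc s
    set e := Equiv.ofBijective σ hσ with he
    set τ : K ≃ₐ[ℚ] K := (σ i).symm.trans (σ s) with hτ
    set p : Fin (n + 1) → Fin (n + 1) := fun k => e.symm ((σ k).trans τ) with hp
    have hσp : ∀ k, σ (p k) = (σ k).trans τ := fun k => e.apply_symm_apply _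
    have hpi : p i = s := by
      have h1 : (σ i).trans τ = σ s := by
        apply AlgEquiv.ext; intro x
        simp [hτ]
      show e.symm ((σ i).trans τ) = s
      rw [h1]
      exact e.symm_apply_apply s
    have hpinj : Function.Injective p := by
      intro a b hab
      apply hσ.1
      have h1 : (σ a).trans τ = (σ b).trans τ := by
        have := congrArg e hab
        simpa only [hp, Equiv.apply_symm_apply] using this
      apply AlgEquiv.ext
      intro x
      exact τ.injective (DFunLike.congr_fun h1 x)
    have hne : ∀ t : Fin n, p (i.succAbove t) ≠ s := by
      intro t h
      exact (Fin.succAbove_ne i t) (hpinj (h.trans hpi.symm))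
    choose q hq using fun t => Fin.exists_succAbove_eq (hne t)
    have hqinj : Function.Injective q := by
      intro a b hab
      have h1 : s.succAbove (q a) = s.succAbove (q b) := congrArg _ hab
      rw [hq a, hq b] at h1
      exact Fin.succAbove_right_injective (hpinj h1)
    set ρ : Equiv.Perm (Fin n) :=
      Equiv.ofBijective q ((Finite.injective_iff_bijective).mp hqinj) with hρ
    have hτm : ∀ j, τ (m i j) = ((Equiv.Perm.sign ρ : ℤ) : K) * m s j := by
      intro j
      have h1 : (A.submatrix i.succAbove j.succAbove).map τ
          = (A.submatrix s.succAbove j.succAbove).submatrix ρ id := by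
        ext t j'
        simp only [Matrix.map_apply, Matrix.submatrix_apply, id_eq, hA, Matrix.of_apply]
        have h2 : s.succAbove (ρ t) = p (i.succAbove t) := hq t
        rw [h2, hσp]
        rfl
      have h3 : τ (m i j) = ((A.submatrix i.succAbove j.succAbove).map τ).det :=
        AlgEquiv.map_det τ _
      rw [h3, h1, Matrix.det_permute]
    have hτc := congrArg τ hc
    rw [map_sum, map_zero] at hτc
    simp only [map_mul, AlgEquiv.commutes, hτm] at hτc
    have h4 : ((Equiv.Perm.sign ρ : ℤ) : K) * ∑ j, algebraMap ℚ K (c j) * m s j = 0 := by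
      rw [Finset.mul_sum, ← hτc]
      exact Finset.sum_congr rfl fun j _ => by ring
    have hε : ((Equiv.Perm.sign ρ : ℤ) : K) ≠ 0 := by
      rcases Int.units_eq_one_or (Equiv.Perm.sign ρ) with h | h <;> simp [h]
    exact (mul_eq_zero.mp h4).resolve_left hε
  -- Step 3 : conclude linear independence via the adjugate of `A`
  have hLI : LinearIndependent ℚ (fun j => m i j) := by
    rw [Fintype.linearIndependent_iff]
    intro c hc
    have hc' : (∑ j, algebraMap ℚ K (c j) * m i j) = 0 := by
      simpa only [Algebra.smul_def] using hc
    have hall := key c hc'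
    set u : Fin (n + 1) → K := fun j => (-1 : K) ^ (j : ℕ) * algebraMap ℚ K (c j) with hu
    have hmv : Matrix.mulVec (Matrix.adjugate A).transpose u = 0 := by
      funext s
      simp only [Matrix.mulVec, dotProduct, Matrix.transpose_apply, Pi.zero_apply]
      have hterm : ∀ j, (Matrix.adjugate A) j s * u j
          = (-1 : K) ^ (s : ℕ) * (algebraMap ℚ K (c j) * m s j) := by
        intro j
        rw [Matrix.adjugate_fin_succ_eq_det_submatrix, hu]
        have hsign : ((-1 : K) ^ ((s : ℕ) + (j : ℕ))) * (-1 : K) ^ (j : ℕ)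
            = (-1 : K) ^ (s : ℕ) := by
          rw [pow_add, mul_assoc, ← pow_add, ← two_mul, pow_mul]
          norm_num
        calc ((-1 : K) ^ ((s : ℕ) + (j : ℕ)) * (A.submatrix s.succAbove j.succAbove).det)
              * ((-1 : K) ^ (j : ℕ) * algebraMap ℚ K (c j))
            = (((-1 : K) ^ ((s : ℕ) + (j : ℕ))) * (-1 : K) ^ (j : ℕ))
              * (algebraMap ℚ K (c j) * m s j) := by rw [hm]; ring
          _ = (-1 : K) ^ (s : ℕ) * (algebraMap ℚ K (c j) * m s j) := by rw [hsign]
      calc (∑ j, (Matrix.adjugate A) j s * u j)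
          = (-1 : K) ^ (s : ℕ) * ∑ j, algebraMap ℚ K (c j) * m s j := by
            rw [Finset.mul_sum]; exact Finset.sum_congr rfl fun j _ => hterm j
        _ = 0 := by rw [hall s, mul_zero]
    have hdet2 : Matrix.det (Matrix.adjugate A).transpose ≠ 0 := by
      rw [Matrix.det_transpose, Matrix.det_adjugate]
      exact pow_ne_zero _ hdet
    have hu0 : u = 0 := by
      by_contra h
      exact hdet2 (Matrix.exists_mulVec_eq_zero_iff.mp ⟨u, h, hmv⟩)
    intro j
    have hj := congrFun hu0 j
    simp only [hu, Pi.zero_apply] at hj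
    have hpow : ((-1 : K) ^ (j : ℕ)) ≠ 0 := pow_ne_zero _ (by norm_num)
    have h5 : algebraMap ℚ K (c j) = 0 := by
      rcases mul_eq_zero.mp hj with h | h
      · exact absurd h hpow
      · exact h
    have := (algebraMap ℚ K).injective (h5.trans (map_zero (algebraMap ℚ K)).symm)
    exact this
  exact ⟨hLI, fun j => hLI.ne_zero j⟩
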